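/- arXiv:2603.28299 — 2 statements merged into one kernel-verified Lean document; each statement's English description precedes it below -/
import Mathlib

section
/- Let k,m ≥ 1, let a_1=1 and a_j≠0 for j=2,…,k+m, and let B be a constant real m×k matrix. For j=1,…,k let v_j ∈ C³((−∞,0]) and for j=k+1,…,k+m let v_j ∈ C³([0,+∞)), and assume v_j, v_j', v_j'' → 0 as x→−∞ (for j≤k) and as x→+∞ (for j>k), and that v_j''' v_j is integrable on each bond. Suppose the vertex conditions hold: a_j v_j(0)=v_1(0) for j=2,…,k+m; (v_{k+1}'(0),…,v_{k+m}'(0))ᵀ = B (v_1'(0),…,v_k'(0))ᵀ; and Σ_{j=1}^k (1/a_j)v_j''(0) = Σ_{j=k+1}^{k+m} (1/a_j)v_j''(0). Then Σ_{j=1}^k ∫_{−∞}^0 v_j'''(x)v_j(x)dx + Σ_{j=k+1}^{k+m} ∫_0^{+∞} v_j'''(x)v_j(x)dx = ½ (v⁻'(0))ᵀ(BᵀB − I_k)(v⁻'(0)), where v⁻'(0)=(v_1'(0),…,v_k'(0))ᵀ. -/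
open MeasureTheory Real Filter Set Topology Matrix

/-- The closed `j`-th bond of the star graph with `k` incoming semi-infinite bonds
`(-∞,0]` and `m` outgoing semi-infinite bonds `[0,+∞)`. -/
def clBond (k m : ℕ) (j : Fin (k + m)) : Set ℝ :=
  if (j : ℕ) < k then Set.Iic 0 else Set.Ici 0

/-- The open `j`-th bond. -/
def inBond (k m : ℕ) (j : Fin (k + m)) : Set ℝ :=
  if (j : ℕ) < k then Set.Iio 0 else Set.Ioi 0

/-- The filter describing `x → ∓∞` along the `j`-th bond. -/
def bondEnd (k m : ℕ) (j : Fin (k + m)) : Filter ℝ :=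
  if (j : ℕ) < k then Filter.atBot else Filter.atTop

/-- First derivative along the `j`-th bond. -/
noncomputable def D1 (k m : ℕ) (v : Fin (k + m) → ℝ → ℝ) (j : Fin (k + m)) : ℝ → ℝ :=
  derivWithin (v j) (clBond k m j)

/-- Second derivative along the `j`-th bond. -/
noncomputable def D2 (k m : ℕ) (v : Fin (k + m) → ℝ → ℝ) (j : Fin (k + m)) : ℝ → ℝ :=
  derivWithin (D1 k m v j) (clBond k m j)

/-- Third derivative along the `j`-th bond. -/
noncomputable def D3 (k m : ℕ) (v : Fin (k + m) → ℝ → ℝ) (j : Fin (k + m)) : ℝ → ℝ :=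
  derivWithin (D2 k m v j) (clBond k m j)

lemma my_integral_Iio (f f' : ℝ → ℝ) (L : ℝ)
    (hcont : ContinuousWithinAt f (Iic 0) 0)
    (hderiv : ∀ x ∈ Iio (0:ℝ), HasDerivAt f (f' x) x)
    (f'int : IntegrableOn f' (Iio (0:ℝ)))
    (hf : Tendsto f atBot (𝓝 L)) : ∫ x in Iio (0:ℝ), f' x = f 0 - L := by
  have A : MeasurableEmbedding fun x : ℝ => -x :=
    (Homeomorph.neg ℝ).isClosedEmbedding.measurableEmbedding
  have hg : ∀ x ∈ Ioi (0:ℝ), HasDerivAt (fun y => f (-y)) (-(f' (-x))) x := by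
    intro x hx
    have h := (hderiv (-x) (by simpa using hx)).comp x (hasDerivAt_neg x)
    simpa [mul_comm, Function.comp_def] using h
  have hgcont : ContinuousWithinAt (fun y => f (-y)) (Ici (0:ℝ)) 0 := by
    have h0 : ContinuousWithinAt f (Iic 0) (-(0:ℝ)) := by simpa using hcont
    exact h0.comp continuous_neg.continuousWithinAt (fun x hx => by simpa using hx)
  have hgint : IntegrableOn (fun y => -(f' (-y))) (Ioi (0:ℝ)) := by
    have h1 : IntegrableOn (fun y => f' (-y)) (Ioi (0:ℝ)) := by
      have h := A.integrableOn_map_iff (f := fun y : ℝ => f' (-y))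
        (μ := (volume : Measure ℝ)) (s := Ioi (0:ℝ))
      rw [Measure.map_neg_eq_self] at h
      rw [h]
      have : (fun x : ℝ => -x) ⁻¹' Ioi 0 = Iio 0 := by ext x; simp
      rw [this]
      have : ((fun y : ℝ => f' (-y)) ∘ fun x : ℝ => -x) = f' := by ext x; simp [Function.comp]
      rw [this]; exact f'int
    exact h1.neg
  have hgtend : Tendsto (fun y => f (-y)) atTop (𝓝 L) := hf.comp tendsto_neg_atTop_atBot
  have key := integral_Ioi_of_hasDerivAt_of_tendsto hgcont hg hgint hgtend
  rw [integral_neg] at key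
  have h2 : (∫ x in Ioi (0:ℝ), f' (-x)) = ∫ x in Iio (0:ℝ), f' x := by
    rw [integral_comp_neg_Ioi, neg_zero, integral_Iic_eq_integral_Iio]
  rw [h2] at key
  simp only [neg_zero] at key
  linarith

lemma ibp_Iic (u : ℝ → ℝ) (hu : ContDiffOn ℝ 3 u (Iic 0))
    (h0 : Tendsto u atBot (𝓝 0))
    (h1 : Tendsto (derivWithin u (Iic 0)) atBot (𝓝 0))
    (h2 : Tendsto (derivWithin (derivWithin u (Iic 0)) (Iic 0)) atBot (𝓝 0))
    (hint : IntegrableOn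
      (fun x => derivWithin (derivWithin (derivWithin u (Iic 0)) (Iic 0)) (Iic 0) x * u x)
      (Iio (0:ℝ))) :
    ∫ x in Iio (0:ℝ),
        derivWithin (derivWithin (derivWithin u (Iic 0)) (Iic 0)) (Iic 0) x * u x
      = u 0 * derivWithin (derivWithin u (Iic 0)) (Iic 0) 0
        - (1/2) * (derivWithin u (Iic 0) 0)^2 := by
  set u1 := derivWithin u (Iic 0) with hu1def
  set u2 := derivWithin u1 (Iic 0) with hu2def
  set u3 := derivWithin u2 (Iic 0) with hu3def
  have hu1 : ContDiffOn ℝ 2 u1 (Iic 0) := hu.derivWithin (uniqueDiffOn_Iic 0) (by norm_num)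
  have hu2 : ContDiffOn ℝ 1 u2 (Iic 0) := hu1.derivWithin (uniqueDiffOn_Iic 0) (by norm_num)
  set F : ℝ → ℝ := fun x => u x * u2 x - (1/2) * (u1 x)^2 with hFdef
  have hcont : ContinuousWithinAt F (Iic 0) 0 := by
    have cu := hu.continuousOn 0 self_mem_Iic
    have cu1 := hu1.continuousOn 0 self_mem_Iic
    have cu2 := hu2.continuousOn 0 self_mem_Iic
    exact (cu.mul cu2).sub (continuousWithinAt_const.mul (cu1.pow 2))
  have hderiv : ∀ x ∈ Iio (0:ℝ), HasDerivAt F (u3 x * u x) x := by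
    intro x hx
    have hmem : Iic (0:ℝ) ∈ 𝓝 x := Iic_mem_nhds hx
    have du : HasDerivAt u (u1 x) x := by
      have d := ((hu.differentiableOn (by norm_num)) x (mem_of_mem_of_subset hx Iio_subset_Iic_self)).differentiableAt hmem
      rw [hu1def, derivWithin_of_mem_nhds hmem]
      exact d.hasDerivAt
    have du1 : HasDerivAt u1 (u2 x) x := by
      have d := ((hu1.differentiableOn (by norm_num)) x (mem_of_mem_of_subset hx Iio_subset_Iic_self)).differentiableAt hmem
      rw [hu2def, derivWithin_of_mem_nhds hmem]
      exact d.hasDerivAt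
    have du2 : HasDerivAt u2 (u3 x) x := by
      have d := ((hu2.differentiableOn (by norm_num)) x (mem_of_mem_of_subset hx Iio_subset_Iic_self)).differentiableAt hmem
      rw [hu3def, derivWithin_of_mem_nhds hmem]
      exact d.hasDerivAt
    have dF := (du.mul du2).sub ((du1.pow 2).const_mul (1/2 : ℝ))
    convert dF using 1
    · rfl
    · rfl
    · rfl
    · norm_num <;> ring
  have htend : Tendsto F atBot (𝓝 (0*0 - (1/2)*(0:ℝ)^2)) :=
    (h0.mul h2).sub ((h1.pow 2).const_mul (1/2 : ℝ))
  rw [show (0*0 - (1/2)*(0:ℝ)^2) = 0 by norm_num] at htend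
  have key := my_integral_Iio F (fun x => u3 x * u x) 0 hcont hderiv hint htend
  rw [key]
  simp only [hFdef]
  ring

lemma ibp_Ici (u : ℝ → ℝ) (hu : ContDiffOn ℝ 3 u (Ici 0))
    (h0 : Tendsto u atTop (𝓝 0))
    (h1 : Tendsto (derivWithin u (Ici 0)) atTop (𝓝 0))
    (h2 : Tendsto (derivWithin (derivWithin u (Ici 0)) (Ici 0)) atTop (𝓝 0))
    (hint : IntegrableOn
      (fun x => derivWithin (derivWithin (derivWithin u (Ici 0)) (Ici 0)) (Ici 0) x * u x)
      (Ioi (0:ℝ))) :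
    ∫ x in Ioi (0:ℝ),
        derivWithin (derivWithin (derivWithin u (Ici 0)) (Ici 0)) (Ici 0) x * u x
      = -(u 0 * derivWithin (derivWithin u (Ici 0)) (Ici 0) 0)
        + (1/2) * (derivWithin u (Ici 0) 0)^2 := by
  set u1 := derivWithin u (Ici 0) with hu1def
  set u2 := derivWithin u1 (Ici 0) with hu2def
  set u3 := derivWithin u2 (Ici 0) with hu3def
  have hu1 : ContDiffOn ℝ 2 u1 (Ici 0) := hu.derivWithin (uniqueDiffOn_Ici 0) (by norm_num)
  have hu2 : ContDiffOn ℝ 1 u2 (Ici 0) := hu1.derivWithin (uniqueDiffOn_Ici 0) (by norm_num)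
  set F : ℝ → ℝ := fun x => u x * u2 x - (1/2) * (u1 x)^2 with hFdef
  have hcont : ContinuousWithinAt F (Ici 0) 0 := by
    have cu := hu.continuousOn 0 self_mem_Ici
    have cu1 := hu1.continuousOn 0 self_mem_Ici
    have cu2 := hu2.continuousOn 0 self_mem_Ici
    exact (cu.mul cu2).sub (continuousWithinAt_const.mul (cu1.pow 2))
  have hderiv : ∀ x ∈ Ioi (0:ℝ), HasDerivAt F (u3 x * u x) x := by
    intro x hx
    have hmem : Ici (0:ℝ) ∈ 𝓝 x := Ici_mem_nhds hx
    have du : HasDerivAt u (u1 x) x := by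
      have d := ((hu.differentiableOn (by norm_num)) x (mem_of_mem_of_subset hx Ioi_subset_Ici_self)).differentiableAt hmem
      rw [hu1def, derivWithin_of_mem_nhds hmem]
      exact d.hasDerivAt
    have du1 : HasDerivAt u1 (u2 x) x := by
      have d := ((hu1.differentiableOn (by norm_num)) x (mem_of_mem_of_subset hx Ioi_subset_Ici_self)).differentiableAt hmem
      rw [hu2def, derivWithin_of_mem_nhds hmem]
      exact d.hasDerivAt
    have du2 : HasDerivAt u2 (u3 x) x := by
      have d := ((hu2.differentiableOn (by norm_num)) x (mem_of_mem_of_subset hx Ioi_subset_Ici_self)).differentiableAt hmem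
      rw [hu3def, derivWithin_of_mem_nhds hmem]
      exact d.hasDerivAt
    have dF := (du.mul du2).sub ((du1.pow 2).const_mul (1/2 : ℝ))
    convert dF using 1
    · rfl
    · rfl
    · rfl
    · norm_num <;> ring
  have htend : Tendsto F atTop (𝓝 (0*0 - (1/2)*(0:ℝ)^2)) :=
    (h0.mul h2).sub ((h1.pow 2).const_mul (1/2 : ℝ))
  rw [show (0*0 - (1/2)*(0:ℝ)^2) = 0 by norm_num] at htend
  have key := integral_Ioi_of_hasDerivAt_of_tendsto hcont hderiv hint htend
  rw [key]
  simp only [hFdef]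
  ring

/-- The integration-by-parts identity on the star graph used in the uniqueness proof:
under the vertex (Kirchhoff-type) conditions and decay at infinity,
`Σ_j ∫ v_j''' v_j = ½ (v⁻'(0))ᵀ (BᵀB − I_k) (v⁻'(0))`. -/
theorem integration_by_parts_star_graph
    (k m : ℕ) (hk : 0 < k) (hm : 0 < m)
    (a : Fin (k + m) → ℝ) (ha1 : a (Fin.castAdd m ⟨0, hk⟩) = 1) (ha : ∀ j, a j ≠ 0)
    (B : Matrix (Fin m) (Fin k) ℝ)
    (v : Fin (k + m) → ℝ → ℝ)
    (hsmooth : ∀ j, ContDiffOn ℝ 3 (v j) (clBond k m j))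
    (hdecay0 : ∀ j, Filter.Tendsto (v j) (bondEnd k m j) (nhds 0))
    (hdecay1 : ∀ j, Filter.Tendsto (D1 k m v j) (bondEnd k m j) (nhds 0))
    (hdecay2 : ∀ j, Filter.Tendsto (D2 k m v j) (bondEnd k m j) (nhds 0))
    (hint : ∀ j, MeasureTheory.IntegrableOn
      (fun x => D3 k m v j x * v j x) (inBond k m j))
    (hv1 : ∀ j : Fin (k + m), a j * v j 0 = v (Fin.castAdd m ⟨0, hk⟩) 0)
    (hv2 : ∀ i : Fin m, D1 k m v (Fin.natAdd k i) 0 =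
      ∑ j : Fin k, B i j * D1 k m v (Fin.castAdd m j) 0)
    (hv3 : ∑ j : Fin k, (1 / a (Fin.castAdd m j)) * D2 k m v (Fin.castAdd m j) 0 =
      ∑ i : Fin m, (1 / a (Fin.natAdd k i)) * D2 k m v (Fin.natAdd k i) 0) :
    (∑ j : Fin k, ∫ x in Set.Iio (0:ℝ),
        D3 k m v (Fin.castAdd m j) x * v (Fin.castAdd m j) x) +
      (∑ i : Fin m, ∫ x in Set.Ioi (0:ℝ),
        D3 k m v (Fin.natAdd k i) x * v (Fin.natAdd k i) x) =
      (1/2) * ((fun j : Fin k => D1 k m v (Fin.castAdd m j) 0) ⬝ᵥ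
        (B.transpose * B - 1).mulVec (fun j : Fin k => D1 k m v (Fin.castAdd m j) 0)) := by
  have hclL : ∀ j : Fin k, clBond k m (Fin.castAdd m j) = Iic 0 := fun j => by
    simp [clBond, Fin.coe_castAdd, j.isLt]
  have hclR : ∀ i : Fin m, clBond k m (Fin.natAdd k i) = Ici 0 := fun i => by
    simp only [clBond, Fin.coe_natAdd]; rw [if_neg (by omega)]
  have hbeL : ∀ j : Fin k, bondEnd k m (Fin.castAdd m j) = atBot := fun j => by
    simp [bondEnd, Fin.coe_castAdd, j.isLt]
  have hbeR : ∀ i : Fin m, bondEnd k m (Fin.natAdd k i) = atTop := fun i => by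
    simp only [bondEnd, Fin.coe_natAdd]; rw [if_neg (by omega)]
  have hinL : ∀ j : Fin k, inBond k m (Fin.castAdd m j) = Iio 0 := fun j => by
    simp [inBond, Fin.coe_castAdd, j.isLt]
  have hinR : ∀ i : Fin m, inBond k m (Fin.natAdd k i) = Ioi 0 := fun i => by
    simp only [inBond, Fin.coe_natAdd]; rw [if_neg (by omega)]
  -- per-bond integral identities
  have keyL : ∀ j : Fin k,
      (∫ x in Set.Iio (0:ℝ), D3 k m v (Fin.castAdd m j) x * v (Fin.castAdd m j) x)
        = v (Fin.castAdd m j) 0 * D2 k m v (Fin.castAdd m j) 0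
          - (1/2) * (D1 k m v (Fin.castAdd m j) 0)^2 := by
    intro j
    have hs := hsmooth (Fin.castAdd m j); rw [hclL j] at hs
    have t0 := hdecay0 (Fin.castAdd m j); rw [hbeL j] at t0
    have t1 := hdecay1 (Fin.castAdd m j)
    have t2 := hdecay2 (Fin.castAdd m j)
    have hi := hint (Fin.castAdd m j)
    simp only [D1, D2, hclL j, hbeL j] at t1 t2
    simp only [D3, D2, D1, hclL j, hinL j] at hi
    have h := ibp_Iic (v (Fin.castAdd m j)) hs t0 t1 t2 hi
    simp only [D3, D2, D1, hclL j]
    exact h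
  have keyR : ∀ i : Fin m,
      (∫ x in Set.Ioi (0:ℝ), D3 k m v (Fin.natAdd k i) x * v (Fin.natAdd k i) x)
        = -(v (Fin.natAdd k i) 0 * D2 k m v (Fin.natAdd k i) 0)
          + (1/2) * (D1 k m v (Fin.natAdd k i) 0)^2 := by
    intro i
    have hs := hsmooth (Fin.natAdd k i); rw [hclR i] at hs
    have t0 := hdecay0 (Fin.natAdd k i); rw [hbeR i] at t0
    have t1 := hdecay1 (Fin.natAdd k i)
    have t2 := hdecay2 (Fin.natAdd k i)
    have hi := hint (Fin.natAdd k i)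
    simp only [D1, D2, hclR i, hbeR i] at t1 t2
    simp only [D3, D2, D1, hclR i, hinR i] at hi
    have h := ibp_Ici (v (Fin.natAdd k i)) hs t0 t1 t2 hi
    simp only [D3, D2, D1, hclR i]
    exact h
  set w : Fin k → ℝ := fun j => D1 k m v (Fin.castAdd m j) 0 with hw
  set w' : Fin m → ℝ := fun i => D1 k m v (Fin.natAdd k i) 0 with hw'
  set q : Fin k → ℝ := fun j => D2 k m v (Fin.castAdd m j) 0 with hq
  set q' : Fin m → ℝ := fun i => D2 k m v (Fin.natAdd k i) 0 with hq'
  set p : Fin k → ℝ := fun j => v (Fin.castAdd m j) 0 with hp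
  set p' : Fin m → ℝ := fun i => v (Fin.natAdd k i) 0 with hp'
  rw [Finset.sum_congr rfl (fun j _ => keyL j), Finset.sum_congr rfl (fun i _ => keyR i)]
  -- cancellation of the second-derivative terms
  have hcancel : ∑ j : Fin k, p j * q j = ∑ i : Fin m, p' i * q' i := by
    have hpj : ∀ j : Fin k, p j = (1 / a (Fin.castAdd m j)) * v (Fin.castAdd m ⟨0, hk⟩) 0 := by
      intro j
      rw [show p j = v (Fin.castAdd m ⟨0, hk⟩) 0 / a (Fin.castAdd m j) from by
        rw [eq_div_iff (ha _), mul_comm]; exact hv1 _]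
      ring
    have hpi : ∀ i : Fin m, p' i = (1 / a (Fin.natAdd k i)) * v (Fin.castAdd m ⟨0, hk⟩) 0 := by
      intro i
      rw [show p' i = v (Fin.castAdd m ⟨0, hk⟩) 0 / a (Fin.natAdd k i) from by
        rw [eq_div_iff (ha _), mul_comm]; exact hv1 _]
      ring
    calc ∑ j : Fin k, p j * q j
        = v (Fin.castAdd m ⟨0, hk⟩) 0 * ∑ j : Fin k, (1 / a (Fin.castAdd m j)) * q j := by
          rw [Finset.mul_sum]; exact Finset.sum_congr rfl fun j _ => by rw [hpj j]; ring
      _ = v (Fin.castAdd m ⟨0, hk⟩) 0 * ∑ i : Fin m, (1 / a (Fin.natAdd k i)) * q' i := by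
          rw [hv3]
      _ = ∑ i : Fin m, p' i * q' i := by
          rw [Finset.mul_sum]; exact Finset.sum_congr rfl fun i _ => by rw [hpi i]; ring
  -- the matrix quadratic form
  have hBw : B.mulVec w = w' := by
    funext i
    simp only [Matrix.mulVec, dotProduct]
    exact (hv2 i).symm
  have hquad : (w ⬝ᵥ (B.transpose * B - 1).mulVec w)
      = (∑ i : Fin m, (w' i)^2) - ∑ j : Fin k, (w j)^2 := by
    rw [Matrix.sub_mulVec, dotProduct_sub, Matrix.one_mulVec, ← Matrix.mulVec_mulVec,
      Matrix.dotProduct_mulVec, Matrix.vecMul_transpose, hBw]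
    simp [dotProduct, sq]
  rw [hquad]
  rw [Finset.sum_sub_distrib, Finset.sum_add_distrib, ← Finset.mul_sum, ← Finset.mul_sum]
  rw [Finset.sum_neg_distrib]
  linarith [hcancel]
end

section
/- Let 0<α<1, μ>0 and t>0. Then the fundamental solution G_α^μ is continuous across x=0 with lim_{x→0⁻} G_α^μ(x,t) = lim_{x→0⁺} G_α^μ(x,t) = t^{μ−1}/(3Γ(μ)), and the second fundamental solution satisfies lim_{x→0⁺} V_α^μ(x,t) = (√3/6) t^{μ−1}/Γ(μ). -/
open MeasureTheory Real Filter Set Topology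

/-- Caputo fractional derivative of order `α` with base point `0`. -/
noncomputable def caputoD (α : ℝ) (g : ℝ → ℝ) (t : ℝ) : ℝ :=
  (1 / Real.Gamma (1 - α)) * ∫ ξ in (0:ℝ)..t, deriv g ξ / (t - ξ) ^ α

/-- Riemann–Liouville fractional integral of order `β` with base point `0`. -/
noncomputable def fracJ (β : ℝ) (g : ℝ → ℝ) (t : ℝ) : ℝ :=
  (1 / Real.Gamma β) * ∫ ξ in (0:ℝ)..t, g ξ * (t - ξ) ^ (β - 1)

/-- The Wright function `φ(λ, μ; z)`. -/
noncomputable def wrightPhi (l μ z : ℂ) : ℂ :=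
  ∑' n : ℕ, z ^ n / ((n.factorial : ℂ) * Complex.Gamma (l * n + μ))

/-- The cube root of unity `e^{2πi/3}`. -/
noncomputable def e23 : ℂ := Complex.exp (2 * Real.pi * Complex.I / 3)

/-- First fundamental solution `G_α^μ(x,t)` of the time-fractional Airy equation. -/
noncomputable def Gfun (α μ : ℝ) (x t : ℝ) : ℝ :=
  if x < 0 then
    (1/3) * t ^ (μ - 1) * (wrightPhi (-(α/3)) μ ((x / t ^ (α/3) : ℝ) : ℂ)).re
  else
    -(2/3) * t ^ (μ - 1) * (e23 * wrightPhi (-(α/3)) μ (e23 * ((x / t ^ (α/3) : ℝ) : ℂ))).re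

/-- Second fundamental solution `V_α^μ(x,t)` of the time-fractional Airy equation. -/
noncomputable def Vfun (α μ : ℝ) (x t : ℝ) : ℝ :=
  (1/3) * t ^ (μ - 1) * (e23 * wrightPhi (-(α/3)) μ (e23 * ((x / t ^ (α/3) : ℝ) : ℂ))).im

/-- `G_α^μ` extended across `x = 0` by its common one-sided limit. -/
noncomputable def Ghat (α μ : ℝ) (x t : ℝ) : ℝ :=
  if x = 0 then t ^ (μ - 1) / (3 * Real.Gamma μ) else Gfun α μ x t


lemma abs_inv_Gamma_le {x : ℝ} (hx : x < 0) :
    |Real.Gamma x|⁻¹ ≤ Real.Gamma (1 - x) / π := by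
  have h1x : (0:ℝ) < 1 - x := by linarith
  have hG1 : 0 < Real.Gamma (1 - x) := Real.Gamma_pos_of_pos h1x
  by_cases hG : Real.Gamma x = 0
  · rw [hG, abs_zero, inv_zero]
    positivity
  · have hsin : Real.sin (π * x) ≠ 0 := by
      intro h
      rw [Real.sin_eq_zero_iff] at h
      obtain ⟨n, hn⟩ := h
      have hx' : (n : ℝ) = x :=
        mul_right_cancel₀ Real.pi_ne_zero (by linarith : (n:ℝ) * π = x * π)
      apply hG
      rw [Real.Gamma_eq_zero_iff]
      have hn0 : n < 0 := by
        by_contra hc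
        push_neg at hc
        have : (0:ℝ) ≤ (n:ℝ) := by exact_mod_cast hc
        linarith [hx'.symm ▸ this]
      refine ⟨(-n).toNat, ?_⟩
      rw [← hx']
      have h5 : ((-n).toNat : ℤ) = -n := Int.toNat_of_nonneg (by omega)
      have h6 := congrArg (fun z : ℤ => (z : ℝ)) h5
      push_cast at h6
      linarith
    have h2 : Real.Gamma x * Real.Gamma (1 - x) * Real.sin (π * x) = π := by
      rw [Real.Gamma_mul_Gamma_one_sub]
      field_simp
    have h3 : |Real.Gamma x| * (Real.Gamma (1 - x) * |Real.sin (π * x)|) = π := by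
      have := congrArg abs h2
      rwa [abs_mul, abs_mul, abs_of_pos hG1, abs_of_pos Real.pi_pos, mul_assoc] at this
    have habs : |Real.Gamma x| ≠ 0 := abs_ne_zero.mpr hG
    have h4 : |Real.Gamma x|⁻¹ = Real.Gamma (1 - x) * |Real.sin (π * x)| / π := by
      rw [eq_div_iff Real.pi_ne_zero]
      calc |Real.Gamma x|⁻¹ * π
          = |Real.Gamma x|⁻¹ * (|Real.Gamma x| * (Real.Gamma (1-x) * |Real.sin (π * x)|)) := by
            rw [h3]
        _ = Real.Gamma (1-x) * |Real.sin (π * x)| := by rw [inv_mul_cancel_left₀ habs]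
    rw [h4]
    have hs1 : |Real.sin (π * x)| ≤ 1 := abs_le.mpr ⟨Real.neg_one_le_sin _, Real.sin_le_one _⟩
    calc Real.Gamma (1-x) * |Real.sin (π * x)| / π ≤ Real.Gamma (1-x) * 1 / π := by
          gcongr
      _ = Real.Gamma (1-x) / π := by ring

lemma summable_wright_bound (a μ : ℝ) (ha : 0 < a) (ha1 : a < 1) :
    Summable (fun n : ℕ => ((n.factorial : ℝ) * |Real.Gamma (μ - a * n)|)⁻¹) := by
  set c : ℝ := 1 - μ with hc
  set r : ℝ := (1 + a) / 2 with hr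
  have hr1 : r < 1 := by rw [hr]; linarith
  set v : ℕ → ℝ := fun n => Real.Gamma (a * n + c) / (π * n.factorial) with hv
  have hv_sum : Summable v := by
    apply summable_of_ratio_norm_eventually_le hr1
    have htend : Tendsto (fun n : ℕ => a * n + c) atTop atTop :=
      tendsto_atTop_add_const_right _ c
        (Tendsto.const_mul_atTop ha tendsto_natCast_atTop_atTop)
    have htend3 : Tendsto (fun n : ℕ => (r - a) * n + (r - c)) atTop atTop :=
      tendsto_atTop_add_const_right _ (r - c)
        (Tendsto.const_mul_atTop (by rw [hr]; linarith) tendsto_natCast_atTop_atTop)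
    filter_upwards [htend.eventually_ge_atTop 2, htend3.eventually_ge_atTop 0] with n h2 h3
    have hxpos : (0:ℝ) < a * n + c := by linarith
    have hx1 : a * ((n:ℕ)+1 : ℕ) + c ≤ a * n + c + 1 := by push_cast; nlinarith
    have hx1' : (2:ℝ) ≤ a * ((n:ℕ)+1 : ℕ) + c := by push_cast; nlinarith
    have hle : Real.Gamma (a * ((n:ℕ)+1 : ℕ) + c) ≤ Real.Gamma (a * n + c + 1) :=
      Real.Gamma_strictMonoOn_Ici.monotoneOn (Set.mem_Ici.mpr hx1')
        (Set.mem_Ici.mpr (by linarith)) hx1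
    have hG : Real.Gamma (a * n + c + 1) = (a * n + c) * Real.Gamma (a * n + c) :=
      Real.Gamma_add_one (ne_of_gt hxpos)
    have hp1 : 0 < Real.Gamma (a * ((n:ℕ)+1 : ℕ) + c) := Real.Gamma_pos_of_pos (by linarith)
    have hp0 : 0 < Real.Gamma (a * n + c) := Real.Gamma_pos_of_pos hxpos
    have hfac : (0:ℝ) < n.factorial := by positivity
    have hkey : a * n + c ≤ r * (n + 1) := by nlinarith
    have hv1 : v (n+1) = Real.Gamma (a * ((n:ℕ)+1 : ℕ) + c) / (π * ((n+1) * n.factorial)) := by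
      simp only [hv, Nat.factorial_succ]
      push_cast
      ring_nf
    rw [Real.norm_eq_abs, Real.norm_eq_abs, abs_of_pos (by simp only [hv]; positivity),
      abs_of_pos (by simp only [hv]; positivity), hv1]
    have hfin : Real.Gamma (a * ((n:ℕ)+1 : ℕ) + c) ≤ r * (↑n+1) * Real.Gamma (a * n + c) := by
      calc Real.Gamma (a * ((n:ℕ)+1 : ℕ) + c) ≤ (a * n + c) * Real.Gamma (a * n + c) := by
            rw [← hG]; exact hle
        _ ≤ r * (↑n+1) * Real.Gamma (a * n + c) := by gcongr
    have hfne : (n.factorial : ℝ) ≠ 0 := ne_of_gt hfac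
    rw [div_le_iff₀ (by positivity)]
    have heq : r * (Real.Gamma (a * ↑n + c) / (π * ↑n.factorial)) *
        (π * ((↑n + 1) * ↑n.factorial)) = r * (↑n+1) * Real.Gamma (a * ↑n + c) := by
      field_simp
    rw [heq]
    exact hfin
  have hev : ∀ᶠ n : ℕ in atTop,
      ((n.factorial : ℝ) * |Real.Gamma (μ - a * n)|)⁻¹ ≤ v n := by
    have htend : Tendsto (fun n : ℕ => a * n) atTop atTop :=
      Tendsto.const_mul_atTop ha tendsto_natCast_atTop_atTop
    filter_upwards [htend.eventually_gt_atTop μ] with n hn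
    have hx : μ - a * n < 0 := by linarith
    have hb := abs_inv_Gamma_le hx
    have h1x : 1 - (μ - a * n) = a * n + c := by rw [hc]; ring
    rw [h1x] at hb
    rw [mul_inv]
    calc ((n.factorial : ℝ))⁻¹ * |Real.Gamma (μ - a * n)|⁻¹
        ≤ ((n.factorial : ℝ))⁻¹ * (Real.Gamma (a * n + c) / π) := by gcongr
      _ = v n := by
          simp only [hv]
          have hfne : (n.factorial : ℝ) ≠ 0 := by positivity
          field_simp
  obtain ⟨N, hN⟩ := Filter.eventually_atTop.mp hev
  rw [← summable_nat_add_iff N]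
  exact Summable.of_nonneg_of_le (fun k => by positivity)
    (fun k => hN (k + N) (by omega)) ((summable_nat_add_iff N).mpr hv_sum)

lemma wrightPhi_zero (l : ℂ) (μ : ℝ) :
    wrightPhi l (μ:ℂ) 0 = (((Real.Gamma μ)⁻¹ : ℝ) : ℂ) := by
  unfold wrightPhi
  rw [tsum_eq_single 0]
  · simp [Complex.Gamma_ofReal]
  · intro n hn
    simp [zero_pow hn]

lemma wrightPhi_continuousAt {a μ : ℝ} (ha : 0 < a) (ha1 : a < 1) :
    ContinuousAt (wrightPhi (-(a : ℂ)) (μ : ℂ)) 0 := by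
  have hsum := summable_wright_bound a μ ha ha1
  have hcont : ContinuousOn
      (fun z : ℂ => ∑' n : ℕ, z ^ n / ((n.factorial : ℂ) * Complex.Gamma (-(a:ℂ) * n + μ)))
      (Metric.closedBall 0 1) := by
    refine continuousOn_tsum
      (u := fun n : ℕ => ((n.factorial : ℝ) * |Real.Gamma (μ - a * n)|)⁻¹)
      (fun n => ((continuous_pow n).div_const _).continuousOn) hsum ?_
    intro n z hz
    have hz1 : ‖z‖ ≤ 1 := mem_closedBall_zero_iff.mp hz
    have harg : (-(a:ℂ) * n + μ) = ((μ - a * n : ℝ) : ℂ) := by push_cast; ring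
    rw [harg, Complex.Gamma_ofReal, div_eq_mul_inv, norm_mul, norm_pow, norm_inv]
    have hnorm : ‖((n.factorial : ℂ)) * ((Real.Gamma (μ - a*n) : ℝ) : ℂ)‖
        = (n.factorial : ℝ) * |Real.Gamma (μ - a * n)| := by
      rw [norm_mul, Complex.norm_natCast, Complex.norm_real, Real.norm_eq_abs]
    rw [hnorm]
    calc ‖z‖ ^ n * ((n.factorial : ℝ) * |Real.Gamma (μ - a * n)|)⁻¹
        ≤ 1 * ((n.factorial : ℝ) * |Real.Gamma (μ - a * n)|)⁻¹ := by
          gcongr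
          exact pow_le_one₀ (norm_nonneg z) hz1
      _ = _ := one_mul _
  have h := hcont.continuousAt (Metric.closedBall_mem_nhds (0:ℂ) one_pos)
  unfold wrightPhi
  exact h

/-- Boundary values at the vertex: for `μ > 0` the fundamental solution `G_α^μ` is
continuous across `x = 0` with common one-sided limit `t^{μ−1}/(3Γ(μ))`, and the
second fundamental solution satisfies `V_α^μ(0+, t) = (√3/6) t^{μ−1}/Γ(μ)`. -/
theorem Gfun_Vfun_vertex_limits (α μ t : ℝ) (hα0 : 0 < α) (hα1 : α < 1)
    (hμ : 0 < μ) (ht : 0 < t) :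
    Filter.Tendsto (fun x => Gfun α μ x t) (nhdsWithin 0 (Set.Iio 0))
      (nhds (t ^ (μ - 1) / (3 * Real.Gamma μ))) ∧
    Filter.Tendsto (fun x => Gfun α μ x t) (nhdsWithin 0 (Set.Ioi 0))
      (nhds (t ^ (μ - 1) / (3 * Real.Gamma μ))) ∧
    Filter.Tendsto (fun x => Vfun α μ x t) (nhdsWithin 0 (Set.Ioi 0))
      (nhds ((Real.sqrt 3 / 6) * t ^ (μ - 1) / Real.Gamma μ)) := by
  have ha : 0 < α/3 := by linarith
  have ha1 : α/3 < 1 := by linarith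
  have hT : (0:ℝ) < t ^ (α/3) := Real.rpow_pos_of_pos ht _
  have hGμ : 0 < Real.Gamma μ := Real.Gamma_pos_of_pos hμ
  have hl : (-((α:ℂ)/3)) = -(((α/3 : ℝ)):ℂ) := by norm_cast
  have hφcont : ContinuousAt (wrightPhi (-((α:ℂ)/3)) (μ:ℂ)) 0 := by
    rw [hl]; exact wrightPhi_continuousAt ha ha1
  have hφ0 : wrightPhi (-((α:ℂ)/3)) (μ:ℂ) 0 = (((Real.Gamma μ)⁻¹ : ℝ):ℂ) := by
    rw [hl]; exact wrightPhi_zero _ μ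
  have hpath : Tendsto (fun x : ℝ => ((x / t^(α/3) : ℝ) : ℂ)) (𝓝 0) (𝓝 0) := by
    have hcont2 : Continuous fun x : ℝ => ((x / t^(α/3) : ℝ) : ℂ) := by continuity
    have h := hcont2.tendsto 0
    simpa using h
  have hpath2 : Tendsto (fun x : ℝ => e23 * ((x / t^(α/3) : ℝ) : ℂ)) (𝓝 0) (𝓝 0) := by
    have hcont2 : Continuous fun x : ℝ => e23 * ((x / t^(α/3) : ℝ) : ℂ) := by continuity
    have h := hcont2.tendsto 0
    simpa using h
  have hkey : Tendsto (fun x : ℝ => wrightPhi (-((α:ℂ)/3)) ↑μ ((x / t^(α/3) : ℝ):ℂ)) (𝓝 0)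
      (𝓝 (((Real.Gamma μ)⁻¹ : ℝ):ℂ)) := by
    rw [← hφ0]; exact hφcont.tendsto.comp hpath
  have hkey2 : Tendsto (fun x : ℝ => wrightPhi (-((α:ℂ)/3)) ↑μ (e23 * ((x / t^(α/3) : ℝ):ℂ)))
      (𝓝 0) (𝓝 (((Real.Gamma μ)⁻¹ : ℝ):ℂ)) := by
    rw [← hφ0]; exact hφcont.tendsto.comp hpath2
  have he23 : e23 = Complex.exp (((2*π/3 : ℝ) : ℂ) * Complex.I) := by
    unfold e23; congr 1; push_cast; ring
  have hre : e23.re = -(1/2) := by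
    rw [he23, Complex.exp_ofReal_mul_I_re,
      (by ring : (2*π/3 : ℝ) = π - π/3), Real.cos_pi_sub, Real.cos_pi_div_three]
  have him : e23.im = Real.sqrt 3 / 2 := by
    rw [he23, Complex.exp_ofReal_mul_I_im,
      (by ring : (2*π/3 : ℝ) = π - π/3), Real.sin_pi_sub, Real.sin_pi_div_three]
  refine ⟨?_, ?_, ?_⟩
  · have h1 : Tendsto (fun x:ℝ => (wrightPhi (-((α:ℂ)/3)) ↑μ ((x / t^(α/3):ℝ):ℂ)).re)
        (nhdsWithin 0 (Set.Iio 0)) (𝓝 ((Real.Gamma μ)⁻¹)) := by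
      have h2 := (Complex.continuous_re.tendsto _).comp (hkey.mono_left (nhdsWithin_le_nhds (s := Set.Iio 0)))
      simpa [Function.comp_def] using h2
    have h3 := h1.const_mul ((1/3) * t^(μ-1))
    have hval : t^(μ-1) / (3 * Real.Gamma μ) = (1/3) * t^(μ-1) * (Real.Gamma μ)⁻¹ := by
      field_simp
    rw [hval]
    refine Tendsto.congr' ?_ h3
    filter_upwards [self_mem_nhdsWithin] with x hx
    simp only [Gfun, if_pos (show x < 0 from hx)]
  · have h1 : Tendsto
        (fun x:ℝ => (e23 * wrightPhi (-((α:ℂ)/3)) ↑μ (e23 * ((x / t^(α/3):ℝ):ℂ))).re)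
        (nhdsWithin 0 (Set.Ioi 0)) (𝓝 (-(1/2) * (Real.Gamma μ)⁻¹)) := by
      have hc : Continuous fun w : ℂ => (e23 * w).re :=
        Complex.continuous_re.comp (continuous_const.mul continuous_id)
      have h2 := (hc.tendsto _).comp (hkey2.mono_left (nhdsWithin_le_nhds (s := Set.Ioi 0)))
      simpa [Complex.mul_re, Complex.ofReal_re, Complex.ofReal_im, hre, Function.comp_def] using h2
    have h3 := h1.const_mul (-(2/3) * t^(μ-1))
    have hval : t^(μ-1) / (3 * Real.Gamma μ)
        = -(2/3) * t^(μ-1) * (-(1/2) * (Real.Gamma μ)⁻¹) := by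
      field_simp
    rw [hval]
    refine Tendsto.congr' ?_ h3
    filter_upwards [self_mem_nhdsWithin] with x hx
    simp only [Gfun, if_neg (show ¬ x < 0 from not_lt.mpr (le_of_lt hx))]
  · have h1 : Tendsto
        (fun x:ℝ => (e23 * wrightPhi (-((α:ℂ)/3)) ↑μ (e23 * ((x / t^(α/3):ℝ):ℂ))).im)
        (nhdsWithin 0 (Set.Ioi 0)) (𝓝 (Real.sqrt 3 / 2 * (Real.Gamma μ)⁻¹)) := by
      have hc : Continuous fun w : ℂ => (e23 * w).im :=
        Complex.continuous_im.comp (continuous_const.mul continuous_id)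
      have h2 := (hc.tendsto _).comp (hkey2.mono_left (nhdsWithin_le_nhds (s := Set.Ioi 0)))
      simpa [Complex.mul_im, Complex.ofReal_re, Complex.ofReal_im, him, Function.comp_def] using h2
    have h3 := h1.const_mul ((1/3) * t^(μ-1))
    have hval : Real.sqrt 3 / 6 * t^(μ-1) / Real.Gamma μ
        = (1/3) * t^(μ-1) * (Real.sqrt 3 / 2 * (Real.Gamma μ)⁻¹) := by
      field_simp
      ring
    rw [hval]
    refine Tendsto.congr' ?_ h3
    filter_upwards with x
    simp only [Vfun]
end
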